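/- arXiv:1803.10436 — 2 statements merged into one kernel-verified Lean document; each statement's English description precedes it below -/
import Mathlib

section
/- Let g be a finite-dimensional solvable real Lie algebra and ⟨·,·⟩ a nil-invariant symmetric bilinear form on g (it suffices that for every X ∈ g the nilpotent part ad(X)_n of the Jordan decomposition of ad(X) is skew-symmetric with respect to ⟨·,·⟩). Then ⟨·,·⟩ is invariant; in particular, g^⊥ is an ideal of g. -/
open Module

namespace NilInvariantPaper

set_option maxHeartbeats 1000000

section Aux

variable {L : Type*} [LieRing L] [LieAlgebra ℝ L] [Module.Finite ℝ L]

/-- Key commutation identity: `⁅z, (ad X) w⁆ = (ad X) ⁅z, w⁆ - ⁅(ad X) z, w⁆`. -/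
private lemma ad_bracket_swap (X z w : L) :
    ⁅z, (LieAlgebra.ad ℝ L X) w⁆ =
      (LieAlgebra.ad ℝ L X) ⁅z, w⁆ - ⁅(LieAlgebra.ad ℝ L X) z, w⁆ := by
  simp only [LieAlgebra.ad_apply]
  rw [leibniz_lie X z w]
  abel

/-- If `(ad X)^N z = 0` then bracketing with `z` sends the range of `(ad X)^(N+e)`
into the range of `(ad X)^(e+1)`. -/
private lemma bracket_pow_mem (X : L) (N : ℕ) :
    ∀ z : L, ((LieAlgebra.ad ℝ L X) ^ N) z = 0 →
    ∀ (e : ℕ) (v : L), v ∈ LinearMap.range ((LieAlgebra.ad ℝ L X) ^ (N + e)) →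
      ⁅z, v⁆ ∈ LinearMap.range ((LieAlgebra.ad ℝ L X) ^ (e + 1)) := by
  set f := LieAlgebra.ad ℝ L X with hfdef
  induction N with
  | zero =>
    intro z hz e v _
    have hz0 : z = 0 := by simpa using hz
    rw [hz0, zero_lie]
    exact zero_mem _
  | succ N ih =>
    intro z hz e
    have hz' : (f ^ N) (f z) = 0 := by
      rw [← Module.End.mul_apply, ← pow_succ]
      exact hz
    induction e with
    | zero =>
      intro v hv
      obtain ⟨u, rfl⟩ := hv
      have hw : (f ^ (N + 1 + 0)) u = f ((f ^ (N + 0)) u) := by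
        rw [show N + 1 + 0 = (N + 0) + 1 by omega, pow_succ']
        rfl
      rw [hw, ad_bracket_swap X z ((f ^ (N + 0)) u)]
      refine sub_mem ?_ ?_
      · exact ⟨⁅z, (f ^ (N + 0)) u⁆, by rw [pow_one]⟩
      · exact ih (f z) hz' 0 _ ⟨u, rfl⟩
    | succ e ihe =>
      intro v hv
      obtain ⟨u, rfl⟩ := hv
      have hw : (f ^ (N + 1 + (e + 1))) u = f ((f ^ (N + 1 + e)) u) := by
        rw [show N + 1 + (e + 1) = (N + 1 + e) + 1 by omega, pow_succ']
        rfl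
      rw [hw, ad_bracket_swap X z ((f ^ (N + 1 + e)) u)]
      refine sub_mem ?_ ?_
      · obtain ⟨a, ha⟩ := ihe ((f ^ (N + 1 + e)) u) ⟨u, rfl⟩
        exact ⟨a, by rw [show e + 1 + 1 = (e + 1) + 1 from rfl, pow_succ',
          Module.End.mul_apply, ha]⟩
      · refine ih (f z) hz' (e + 1) _ ?_
        exact ⟨u, by rw [show N + (e + 1) = N + 1 + e by omega]⟩

/-- The key inductive step: if the bilinear symmetric form `B` is `ad w`-skew for every `w`
in the range of `(ad X)^2`, and the nilpotent Jordan part of `ad X` is `B`-skew, then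
`ad X` itself is `B`-skew. -/
private lemma keyStep (B : LinearMap.BilinForm ℝ L) (hsym : ∀ x y : L, B x y = B y x)
    (X : L) (s n : Module.End ℝ L)
    (hs_ss : s.IsSemisimple) (hn_nil : IsNilpotent n) (hcomm : Commute s n)
    (hsum : LieAlgebra.ad ℝ L X = n + s)
    (hnskew : ∀ y z : L, B (n y) z = - B y (n z))
    (hskew2 : ∀ w ∈ LinearMap.range ((LieAlgebra.ad ℝ L X) ^ 2),
      ∀ a b : L, B ⁅w, a⁆ b = - B a ⁅w, b⁆) :
    ∀ y z : L, B ⁅X, y⁆ z = - B y ⁅X, z⁆ := by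
  set f := LieAlgebra.ad ℝ L X with hfdef
  have hsf : Commute s f := by rw [hsum]; exact hcomm.add_right (Commute.refl s)
  have hnf : Commute n f := by rw [hsum]; exact (Commute.refl n).add_right hcomm.symm
  -- Fitting decomposition data
  obtain ⟨D, ⟨hcompl, hinf⟩, hD2⟩ :=
    ((f.eventually_isCompl_ker_pow_range_pow.and f.eventually_iInf_range_pow_eq).and
      (Filter.eventually_ge_atTop 2)).exists
  set F := LinearMap.ker (f ^ D) with hFdef
  set m := LinearMap.range (f ^ D) with hmdef
  have hmono : ∀ a b : ℕ, LinearMap.range (f ^ (a + b)) ≤ LinearMap.range (f ^ a) := by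
    rintro a b x ⟨u, rfl⟩
    exact ⟨(f ^ b) u, by rw [← Module.End.mul_apply, ← pow_add]⟩
  have hstab : ∀ k, D ≤ k → LinearMap.range (f ^ k) = m := by
    intro k hk
    have h1 : (⨅ i, LinearMap.range (f ^ i)) ≤ LinearMap.range (f ^ k) := iInf_le _ k
    rw [hinf] at h1
    refine le_antisymm ?_ h1
    obtain ⟨c, rfl⟩ := Nat.exists_eq_add_of_le hk
    exact hmono D c
  -- basic invariance facts
  have hFinv : ∀ g : Module.End ℝ L, Commute g f → ∀ z ∈ F, g z ∈ F := by
    intro g hg z hz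
    rw [hFdef, LinearMap.mem_ker] at hz ⊢
    rw [← Module.End.mul_apply, ← (hg.pow_right D).eq, Module.End.mul_apply, hz, map_zero]
  have hminv : ∀ g : Module.End ℝ L, Commute g f → ∀ v ∈ m, g v ∈ m := by
    rintro g hg v ⟨u, rfl⟩
    exact ⟨g u, by rw [← Module.End.mul_apply, ← (hg.pow_right D).eq, Module.End.mul_apply]⟩
  -- membership of X
  have hXF : X ∈ F := by
    rw [hFdef, LinearMap.mem_ker]
    obtain ⟨k, rfl⟩ : ∃ k, D = k + 1 := ⟨D - 1, by omega⟩
    rw [pow_succ, Module.End.mul_apply]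
    have : f X = 0 := by rw [hfdef]; simp [LieAlgebra.ad_apply]
    rw [this, map_zero]
  -- elements of m are brackets with X of elements of m
  have hmem_m_f : ∀ v ∈ m, ∃ v', v' ∈ m ∧ ⁅X, v'⁆ = v := by
    intro v hv
    have hv' : v ∈ LinearMap.range (f ^ (D + 1)) := by rw [hstab (D + 1) (by omega)]; exact hv
    obtain ⟨u, hu⟩ := hv'
    refine ⟨(f ^ D) u, ⟨u, rfl⟩, ?_⟩
    have : ⁅X, (f ^ D) u⁆ = f ((f ^ D) u) := by rw [hfdef]; simp [LieAlgebra.ad_apply]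
    rw [this, ← Module.End.mul_apply, ← pow_succ']
    exact hu
  -- skewness on m
  have hskewm : ∀ w ∈ m, ∀ a b : L, B ⁅w, a⁆ b = - B a ⁅w, b⁆ := by
    intro w hw a b
    refine hskew2 w ?_ a b
    obtain ⟨c, rfl⟩ : ∃ c, D = 2 + c := ⟨D - 2, by omega⟩
    exact hmono 2 c hw
  -- s vanishes on F
  have hsF0 : ∀ z ∈ F, s z = 0 := by
    have hFs : ∀ x ∈ F, s x ∈ F := hFinv s hsf
    have hFsmem : F ∈ s.invtSubmodule :=
      (Module.End.mem_invtSubmodule s).mpr (fun x hx => hFs x hx)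
    have hFf : ∀ x ∈ F, f x ∈ F := hFinv f (Commute.refl f)
    have hFn : ∀ x ∈ F, n x ∈ F := hFinv n hnf
    have hs'eq : s.restrict hFs = f.restrict hFf - n.restrict hFn := by
      ext x
      have : s x.1 = f x.1 - n x.1 := by rw [hsum]; simp
      simpa [LinearMap.restrict_apply] using this
    have hf'nil : IsNilpotent (f.restrict hFf) := by
      refine ⟨D, ?_⟩
      rw [Module.End.pow_restrict]
      ext x
      have hx : (f ^ D) x.1 = 0 := x.2
      simpa [LinearMap.restrict_apply] using hx
    have hn'nil : IsNilpotent (n.restrict hFn) := by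
      obtain ⟨k, hk⟩ := hn_nil
      refine ⟨k, ?_⟩
      rw [Module.End.pow_restrict]
      ext x
      have : (n ^ k) x.1 = 0 := by rw [hk]; rfl
      simpa [LinearMap.restrict_apply] using this
    have hcfn : Commute (f.restrict hFf) (n.restrict hFn) := by
      ext x
      have : f (n x.1) = n (f x.1) := by
        have := LinearMap.congr_fun hnf.eq x.1
        simpa [Module.End.mul_apply] using this.symm
      simpa [LinearMap.restrict_apply, Module.End.mul_apply] using this
    have hs'nil : IsNilpotent (s.restrict hFs) := by
      rw [hs'eq]
      exact hcfn.isNilpotent_sub hf'nil hn'nil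
    have hs'ss2 := hs_ss.restrict hFsmem
    have hs'0 : s.restrict hFs = 0 := Module.End.eq_zero_of_isNilpotent_isSemisimple hs'nil hs'ss2
    intro z hz
    have := LinearMap.congr_fun hs'0 ⟨z, hz⟩
    simpa [LinearMap.restrict_apply] using congrArg Subtype.val this
  -- Claim 1a : B X v = 0 for v ∈ m
  have claim1a : ∀ v ∈ m, B X v = 0 := by
    intro v hv
    obtain ⟨v', hv'm, rfl⟩ := hmem_m_f v hv
    have h1 := hskewm v' hv'm X X
    have h2 := hsym ⁅v', X⁆ X
    have h3 : B X ⁅v', X⁆ = 0 := by linarith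
    have h4 : (⁅X, v'⁆ : L) = -⁅v', X⁆ := (lie_skew X v').symm
    rw [h4, map_neg, h3, neg_zero]
  -- Claim 1b : B z v = 0 for z ∈ F, v ∈ m
  have claim1b : ∀ z ∈ F, ∀ v ∈ m, B z v = 0 := by
    intro z hz v hv
    obtain ⟨v', hv'm, rfl⟩ := hmem_m_f v hv
    have hzD : (f ^ D) z = 0 := hz
    have hv'range : v' ∈ LinearMap.range (f ^ (D + (D - 1))) := by
      rw [hstab (D + (D - 1)) (by omega)]; exact hv'm
    have hzv' : ⁅z, v'⁆ ∈ m := by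
      have h5 := bracket_pow_mem X D z hzD (D - 1) v' hv'range
      rwa [show D - 1 + 1 = D by omega] at h5
    have hv'z : (⁅v', z⁆ : L) ∈ m := by
      rw [← lie_skew]
      exact neg_mem hzv'
    have h6 : B X ⁅v', z⁆ = 0 := claim1a ⁅v', z⁆ hv'z
    have h7 := hsym ⁅v', z⁆ X
    have h1 := hskewm v' hv'm z X
    have h4 : (⁅X, v'⁆ : L) = -⁅v', X⁆ := (lie_skew X v').symm
    rw [h4, map_neg]
    linarith
  -- Claim 2 : skewness of s restricted to m
  have hads : ∀ u : L, s u = ⁅X, u⁆ - n u := by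
    intro u
    have hfu : (⁅X, u⁆ : L) = n u + s u := by
      have : ⁅X, u⁆ = f u := by rw [hfdef]; simp [LieAlgebra.ad_apply]
      rw [this, hsum]; simp
    rw [hfu]; abel
  have hsmm : ∀ u ∈ m, s u ∈ m := hminv s hsf
  have claim2 : ∀ u ∈ m, ∀ v ∈ m, B (s u) v + B u (s v) = 0 := by
    intro u hu v hv
    have e1 : B (s u) v = B ⁅X, u⁆ v - B (n u) v := by rw [hads u]; simp
    have e2 : B ⁅X, u⁆ v = B X ⁅u, v⁆ := by
      have h1 := hskewm u hu X v
      have h4 : (⁅X, u⁆ : L) = -⁅u, X⁆ := (lie_skew X u).symm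
      rw [h4, map_neg]
      simp only [LinearMap.neg_apply]
      linarith
    have e3 : B (s v) u = B ⁅X, v⁆ u - B (n v) u := by rw [hads v]; simp
    have e4 : B ⁅X, v⁆ u = B X ⁅v, u⁆ := by
      have h1 := hskewm v hv X u
      have h4 : (⁅X, v⁆ : L) = -⁅v, X⁆ := (lie_skew X v).symm
      rw [h4, map_neg]
      simp only [LinearMap.neg_apply]
      linarith
    have e5 : B X ⁅v, u⁆ = - B X ⁅u, v⁆ := by
      have h4 : (⁅v, u⁆ : L) = -⁅u, v⁆ := (lie_skew v u).symm
      rw [h4, map_neg]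
    have e6 := hnskew v u
    have e7 := hsym v (n u)
    have e8 := hsym u (s v)
    have e9 := hnskew u v
    linarith
  -- conclusion
  intro y z
  obtain ⟨y0, hy0, y1, hy1, hy⟩ := Submodule.mem_sup.mp
    (show y ∈ F ⊔ m by rw [hcompl.sup_eq_top]; trivial)
  obtain ⟨z0, hz0, z1, hz1, hz⟩ := Submodule.mem_sup.mp
    (show z ∈ F ⊔ m by rw [hcompl.sup_eq_top]; trivial)
  have hfy : (⁅X, y⁆ : L) = n y + s y := by
    have : ⁅X, y⁆ = f y := by rw [hfdef]; simp [LieAlgebra.ad_apply]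
    rw [this, hsum]; simp
  have hfz : (⁅X, z⁆ : L) = n z + s z := by
    have : ⁅X, z⁆ = f z := by rw [hfdef]; simp [LieAlgebra.ad_apply]
    rw [this, hsum]; simp
  have hsy : s y = s y1 := by
    rw [← hy, map_add, hsF0 y0 hy0, zero_add]
  have hsz : s z = s z1 := by
    rw [← hz, map_add, hsF0 z0 hz0, zero_add]
  have E1 : B ⁅X, y⁆ z = B (n y) z + B (s y1) z := by
    rw [hfy, hsy, map_add]; simp
  have E2 : B y ⁅X, z⁆ = B y (n z) + B y (s z1) := by
    rw [hfz, hsz, map_add]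
  have E3 : B (s y1) z = B (s y1) z0 + B (s y1) z1 := by
    rw [← hz, map_add]
  have E4 : B y (s z1) = B y0 (s z1) + B y1 (s z1) := by
    rw [← hy, map_add]; simp
  have E5 : B (s y1) z0 = 0 := by
    rw [hsym]; exact claim1b z0 hz0 _ (hsmm y1 hy1)
  have E6 : B y0 (s z1) = 0 := claim1b y0 hy0 _ (hsmm z1 hz1)
  have E7 := claim2 y1 hy1 z1 hz1
  have E8 := hnskew y z
  linarith

end Aux

/-- Baues–Globke, Theorem 1.2.
Let `g` be a finite-dimensional solvable real Lie algebra with a symmetric bilinear form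
such that for every `X ∈ g` the nilpotent part `ad(X)_n` of the Jordan decomposition of
`ad(X)` is skew-symmetric (this holds in particular for nil-invariant forms).  Then the
form is invariant; in particular its kernel `g^⊥` is an ideal of `g`. -/
theorem solvable_nilinvariant_is_invariant
    {L : Type*} [LieRing L] [LieAlgebra ℝ L] [Module.Finite ℝ L]
    (B : LinearMap.BilinForm ℝ L) (hsym : ∀ x y : L, B x y = B y x)
    (hsolv : LieAlgebra.IsSolvable L)
    (hnilpart : ∀ (X : L) (σ ν : Module.End ℝ L), σ.IsSemisimple → IsNilpotent ν →
      Commute σ ν → LieAlgebra.ad ℝ L X = σ + ν →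
      ∀ y z : L, B (ν y) z = - B y (ν z)) :
    (∀ X y z : L, B ⁅X, y⁆ z = - B y ⁅X, z⁆) ∧
    (∀ x ∈ LinearMap.ker B, ∀ y : L, ⁅y, x⁆ ∈ LinearMap.ker B) := by
  have had : ∀ X y z : L, B ⁅X, y⁆ z = - B y ⁅X, z⁆ := by
    obtain ⟨k, hk⟩ := (LieAlgebra.isSolvable_iff ℝ L).mp hsolv
    have key : ∀ j i : ℕ, LieAlgebra.derivedSeries ℝ L (i + j) = ⊥ →
        ∀ X ∈ LieAlgebra.derivedSeries ℝ L i, ∀ y z : L, B ⁅X, y⁆ z = - B y ⁅X, z⁆ := by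
      intro j
      induction j with
      | zero =>
        intro i h X hX y z
        rw [Nat.add_zero] at h
        rw [h, LieSubmodule.mem_bot] at hX
        rw [hX]
        simp
      | succ j ih =>
        intro i h X hX
        obtain ⟨n, hn_mem, s, hs_mem, hn_nil, hs_ss, hsum⟩ :=
          Module.End.exists_isNilpotent_isSemisimple (f := LieAlgebra.ad ℝ L X)
        have hcomm : Commute s n :=
          Algebra.commute_of_mem_adjoin_singleton_of_commute hn_mem
            ((Algebra.commute_of_mem_adjoin_self hs_mem).symm)
        have hnskew : ∀ y z : L, B (n y) z = - B y (n z) :=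
          hnilpart X s n hs_ss hn_nil hcomm (by rw [hsum, add_comm])
        refine keyStep B hsym X s n hs_ss hn_nil hcomm hsum hnskew ?_
        intro w hw a b
        obtain ⟨u, hu⟩ := hw
        have hXu : (⁅X, u⁆ : L) ∈ LieAlgebra.derivedSeries ℝ L i := by
          have h1 : (⁅u, X⁆ : L) ∈ LieAlgebra.derivedSeries ℝ L i :=
            (LieAlgebra.derivedSeries ℝ L i).lie_mem hX
          rw [← lie_skew]
          exact neg_mem h1
        have hw' : w ∈ LieAlgebra.derivedSeries ℝ L (i + 1) := by
          have hw2 : w = ⁅X, ⁅X, u⁆⁆ := by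
            rw [← hu, pow_two, Module.End.mul_apply]
            simp [LieAlgebra.ad_apply]
          rw [hw2]
          rw [LieAlgebra.derivedSeries_def, LieAlgebra.derivedSeriesOfIdeal_succ]
          exact LieSubmodule.lie_mem_lie hX hXu
        have h' : LieAlgebra.derivedSeries ℝ L ((i + 1) + j) = ⊥ := by
          rw [show (i + 1) + j = i + (j + 1) by omega]
          exact h
        exact ih (i + 1) h' w hw' a b
    intro X y z
    exact key k 0 (by simpa using hk) X (LieSubmodule.mem_top _) y z
  refine ⟨had, ?_⟩
  intro x hx y
  rw [LinearMap.mem_ker] at hx ⊢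
  ext z
  have h1 := had y x z
  rw [hx] at h1
  simpa using h1

end NilInvariantPaper
end

section
/- Let g = so_n ⋉ ℝⁿ be the Euclidean Lie algebra, where so_n (real skew-symmetric n×n matrices) acts on ℝⁿ by the standard action, with n ≥ 4, and let ⟨·,·⟩ be a nil-invariant symmetric bilinear form on g. Then the ideal ℝⁿ is contained in the metric radical g^⊥, i.e. ⟨v, X⟩ = 0 for all v ∈ ℝⁿ and X ∈ g. -/
open Module Matrix

attribute [local instance 100] LieRing.ofAssociativeRing

namespace NilInvariantPaper

variable {L : Type*} [LieRing L] [LieAlgebra ℝ L]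

/-- Our rendering of the smallest algebraic Lie subalgebra of `End ℝ L` containing the
image of the adjoint representation: the smallest Lie subalgebra of endomorphisms
containing every `ad x` and closed under Jordan–Chevalley decompositions. -/
def algebraicHull (L : Type*) [LieRing L] [LieAlgebra ℝ L] :
    LieSubalgebra ℝ (Module.End ℝ L) :=
  sInf {A : LieSubalgebra ℝ (Module.End ℝ L) |
    (∀ x : L, LieAlgebra.ad ℝ L x ∈ A) ∧
    ∀ φ ∈ A, ∀ σ ν : Module.End ℝ L, σ.IsSemisimple → IsNilpotent ν →
      Commute σ ν → φ = σ + ν → σ ∈ A ∧ ν ∈ A}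

/-- A bilinear form on a Lie algebra is *nil-invariant* if every nilpotent operator in
the smallest algebraic Lie subalgebra of endomorphisms containing the adjoint
representation acts skew-symmetrically. -/
def IsNilInvariant (B : LinearMap.BilinForm ℝ L) : Prop :=
  ∀ φ ∈ algebraicHull L, IsNilpotent φ → ∀ x y : L, B (φ x) y = - B x (φ y)

/-- Invariance of a bilinear form by a set of elements of the Lie algebra. -/
def IsInvariantBy (B : LinearMap.BilinForm ℝ L) (H : Set L) : Prop :=
  ∀ X ∈ H, ∀ y z : L, B ⁅X, y⁆ z = - B y ⁅X, z⁆

/-- A (real) bilinear form is definite if it is positive or negative definite. -/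
def IsDefinite {M : Type*} [AddCommGroup M] [Module ℝ M]
    (F : LinearMap.BilinForm ℝ M) : Prop :=
  (∀ x : M, x ≠ 0 → 0 < F x x) ∨ (∀ x : M, x ≠ 0 → F x x < 0)

/-- The elements of the Lie algebra centralizing a given subspace. -/
def centralizerOf (W : Submodule ℝ L) : Submodule ℝ L where
  carrier := {x | ∀ y ∈ W, ⁅x, y⁆ = 0}
  add_mem' := by
    intro a b ha hb y hy
    rw [add_lie, ha y hy, hb y hy, add_zero]
  zero_mem' := by
    intro y hy
    exact zero_lie y
  smul_mem' := by
    intro c x hx y hy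
    rw [smul_lie, hx y hy, smul_zero]

/-- The center of a subspace: its elements that centralize it. -/
def centerOf (W : Submodule ℝ L) : Submodule ℝ L := W ⊓ centralizerOf W

/-- The orthogonal complement of a subspace with respect to a bilinear form. -/
def orthoComp (B : LinearMap.BilinForm ℝ L) (W : Submodule ℝ L) : Submodule ℝ L where
  carrier := {x | ∀ w ∈ W, B x w = 0}
  add_mem' := by
    intro a b ha hb w hw
    simp [ha w hw, hb w hw]
  zero_mem' := by
    intro w hw
    simp
  smul_mem' := by
    intro c x hx w hw
    simp [hx w hw]

/-- A subspace is totally isotropic for `B` if `B` vanishes identically on it. -/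
def IsTotallyIsotropic (B : LinearMap.BilinForm ℝ L) (W : Submodule ℝ L) : Prop :=
  ∀ x ∈ W, ∀ y ∈ W, B x y = 0

/-- The index of (the restriction to `W` of) a bilinear form: the maximal dimension of a
totally isotropic subspace of `W`. -/
noncomputable def formIndexOn (B : LinearMap.BilinForm ℝ L) (W : Submodule ℝ L) : ℕ :=
  sSup {n | ∃ U : Submodule ℝ L, U ≤ W ∧ IsTotallyIsotropic B U ∧ finrank ℝ U = n}

/-- The index of a bilinear form. -/
noncomputable def formIndex (B : LinearMap.BilinForm ℝ L) : ℕ := formIndexOn B ⊤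

/-- Nondegeneracy of the restriction of `B` to a subspace. -/
def IsNondegenerateOn (B : LinearMap.BilinForm ℝ L) (W : Submodule ℝ L) : Prop :=
  ∀ x ∈ W, (∀ y ∈ W, B x y = 0) → x = 0

/-- The restriction of `B` to `W` is definite. -/
def IsDefiniteOn (B : LinearMap.BilinForm ℝ L) (W : Submodule ℝ L) : Prop :=
  (∀ x ∈ W, x ≠ 0 → 0 < B x x) ∨ (∀ x ∈ W, x ≠ 0 → B x x < 0)

/-- The restriction of `B` to `W` is semidefinite. -/
def IsSemidefiniteOn (B : LinearMap.BilinForm ℝ L) (W : Submodule ℝ L) : Prop :=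
  (∀ x ∈ W, 0 ≤ B x x) ∨ (∀ x ∈ W, B x x ≤ 0)

/-- The restriction of `B` to `W` is Lorentzian: nondegenerate of index one. -/
def IsLorentzianOn (B : LinearMap.BilinForm ℝ L) (W : Submodule ℝ L) : Prop :=
  IsNondegenerateOn B W ∧ formIndexOn B W = 1


lemma exists_ne3 {n : ℕ} (hn : 4 ≤ n) (p i j : Fin n) :
    ∃ k : Fin n, k ≠ p ∧ k ≠ i ∧ k ≠ j := by
  by_contra h
  push_neg at h
  have hsub : (Finset.univ : Finset (Fin n)) ⊆ ({p, i, j} : Finset (Fin n)) := by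
    intro k _
    simp only [Finset.mem_insert, Finset.mem_singleton]
    by_cases h1 : k = p
    · exact Or.inl h1
    by_cases h2 : k = i
    · exact Or.inr (Or.inl h2)
    exact Or.inr (Or.inr (h k h1 h2))
  have h4 := Finset.card_le_card hsub
  rw [Finset.card_univ, Fintype.card_fin] at h4
  have h5 : ({p, i, j} : Finset (Fin n)).card ≤ 3 := by
    refine le_trans (Finset.card_insert_le _ _) ?_
    have := Finset.card_insert_le i ({j} : Finset (Fin n))
    simp only [Finset.card_singleton] at this
    omega
  omega

def Eij {n : ℕ} (i j : Fin n) : Matrix (Fin n) (Fin n) ℝ :=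
  Matrix.single i j 1 - Matrix.single j i 1

lemma Eij_mem {n : ℕ} (i j : Fin n) : Eij i j ∈ LieAlgebra.Orthogonal.so (Fin n) ℝ := by
  rw [LieAlgebra.Orthogonal.so, mem_skewAdjointMatricesLieSubalgebra,
    mem_skewAdjointMatricesSubmodule]
  show (Eij i j)ᵀ * 1 = 1 * -(Eij i j)
  rw [Matrix.mul_one, Matrix.one_mul]
  ext a b
  simp only [Eij, Matrix.transpose_apply, Matrix.sub_apply, Matrix.neg_apply,
    Matrix.single, Matrix.of_apply]
  by_cases h1 : i = b <;> by_cases h2 : j = a <;> by_cases h3 : i = a <;> by_cases h4 : j = b <;>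
    simp [h1, h2, h3, h4, and_comm]

lemma Eij_mulVec_same {n : ℕ} {i j : Fin n} (h : i ≠ j) :
    Eij i j *ᵥ Pi.single j (1:ℝ) = Pi.single i 1 := by
  rw [Eij, Matrix.sub_mulVec, Matrix.single_mulVec, Matrix.single_mulVec]
  ext a
  by_cases h1 : a = i <;> by_cases h2 : a = j <;>
    simp [h1, h2, Function.update_apply, Pi.single_apply, h, Ne.symm h]

lemma Eij_mulVec_ne {n : ℕ} {i j k : Fin n} (h1 : k ≠ i) (h2 : k ≠ j) :
    Eij i j *ᵥ Pi.single k (1:ℝ) = 0 := by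
  rw [Eij, Matrix.sub_mulVec, Matrix.single_mulVec, Matrix.single_mulVec]
  ext a
  by_cases h3 : a = i <;> by_cases h4 : a = j <;>
    simp [h3, h4, Function.update_apply, Pi.single_apply, Ne.symm h1, Ne.symm h2]

lemma funext_vanish {n : ℕ} (g : (Fin n → ℝ) → ℝ)
    (hadd : ∀ a b, g (a + b) = g a + g b)
    (hsmul : ∀ (c : ℝ) a, g (c • a) = c * g a)
    (h : ∀ i, g (Pi.single i 1) = 0) : ∀ z, g z = 0 := by
  have hzero : g 0 = 0 := by
    have := hsmul 0 0; simpa using this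
  have hsum : ∀ (s : Finset (Fin n)) (F : Fin n → (Fin n → ℝ)),
      g (∑ i ∈ s, F i) = ∑ i ∈ s, g (F i) := by
    intro s F
    induction s using Finset.induction with
    | empty => simpa using hzero
    | insert a s hx ih => rw [Finset.sum_insert hx, hadd, ih, Finset.sum_insert hx]
  intro z
  rw [← Finset.univ_sum_single z, hsum]
  apply Finset.sum_eq_zero
  intro i _
  have hi : Pi.single i (z i) = z i • (Pi.single i (1:ℝ) : Fin n → ℝ) := by
    ext a; by_cases hai : a = i <;> simp [hai, Pi.single_apply]
  rw [hi, hsmul, h, mul_zero]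


/-- Theorem on Euclidean Lie algebras, `n ≥ 4`.
Let `g = so_n ⋉ ℝⁿ` be the Euclidean Lie algebra (presented as a real Lie algebra `L`
with an abelian ideal `V ≅ ℝⁿ`, a complementary subalgebra `K ≅ so_n`, the bracket of
`K` on `V` corresponding to matrix–vector multiplication), `n ≥ 4`, and let `B` be a
nil-invariant symmetric bilinear form on `g`.  Then `ℝⁿ ⊆ g^⊥`. -/
theorem euclidean_translations_in_radical
    {L : Type*} [LieRing L] [LieAlgebra ℝ L] [Module.Finite ℝ L]
    (n : ℕ) (hn : 4 ≤ n)
    (B : LinearMap.BilinForm ℝ L) (hsym : ∀ x y : L, B x y = B y x)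
    (hnil : IsNilInvariant B)
    (K : LieSubalgebra ℝ L) (V : LieIdeal ℝ L)
    (hVab : ∀ x ∈ V, ∀ y ∈ V, ⁅x, y⁆ = (0 : L))
    (hdisj : K.toSubmodule ⊓ V.toSubmodule = ⊥)
    (hsum : K.toSubmodule ⊔ V.toSubmodule = ⊤)
    (e : ↥V ≃ₗ[ℝ] (Fin n → ℝ))
    (f : ↥K ≃ₗ⁅ℝ⁆ ↥(LieAlgebra.Orthogonal.so (Fin n) ℝ))
    (haction : ∀ (x : ↥K) (v : ↥V),
      e ⟨⁅(x : L), (v : L)⁆, V.lie_mem v.2⟩ =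
        Matrix.mulVec ((f x : ↥(LieAlgebra.Orthogonal.so (Fin n) ℝ)) :
          Matrix (Fin n) (Fin n) ℝ) (e v)) :
    ∀ v ∈ V, ∀ x : L, B v x = 0 := by
  classical
  -- every ad x lies in the algebraic hull
  have had_mem : ∀ x : L, LieAlgebra.ad ℝ L x ∈ algebraicHull L := by
    intro x
    have h : LieAlgebra.ad ℝ L x ∈ (↑(algebraicHull L) : Set (Module.End ℝ L)) := by
      rw [algebraicHull, LieSubalgebra.coe_sInf]
      exact Set.mem_iInter₂.mpr fun A hA => hA.1 x
    exact h
  -- ad u is nilpotent for u in V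
  have hadnil : ∀ u : L, u ∈ V → IsNilpotent (LieAlgebra.ad ℝ L u) := by
    intro u hu
    refine ⟨2, LinearMap.ext fun x => ?_⟩
    have h2 : ⁅u, x⁆ ∈ V := by
      rw [← lie_skew]
      exact V.neg_mem (V.lie_mem hu)
    rw [pow_two]
    simp only [Module.End.mul_apply, LieAlgebra.ad_apply, LinearMap.zero_apply]
    exact hVab u hu _ h2
  -- invariance by elements of V
  have hinv : ∀ u ∈ V, ∀ x y : L, B ⁅u, x⁆ y = - B x ⁅u, y⁆ := by
    intro u hu x y
    have h := hnil _ (had_mem u) (hadnil u hu) x y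
    simpa only [LieAlgebra.ad_apply] using h
  -- the bracket in coordinates
  have hbr : ∀ (A : Matrix (Fin n) (Fin n) ℝ) (hA : A ∈ LieAlgebra.Orthogonal.so (Fin n) ℝ)
      (z : Fin n → ℝ),
      ((e.symm (A *ᵥ z) : ↥V) : L)
        = ⁅((f.symm ⟨A, hA⟩ : ↥K) : L), ((e.symm z : ↥V) : L)⁆ := by
    intro A hA z
    have h : e ⟨⁅((f.symm ⟨A, hA⟩ : ↥K) : L), ((e.symm z : ↥V) : L)⁆,
        V.lie_mem (e.symm z).2⟩ = A *ᵥ z := by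
      rw [haction (f.symm ⟨A, hA⟩) (e.symm z), f.apply_symm_apply, e.apply_symm_apply]
    have h2 := congrArg e.symm h
    rw [e.symm_apply_apply] at h2
    exact (congrArg Subtype.val h2).symm
  -- brackets [K,V] are orthogonal to V
  have key1 : ∀ (A : Matrix (Fin n) (Fin n) ℝ) (hA : A ∈ LieAlgebra.Orthogonal.so (Fin n) ℝ)
      (z w : Fin n → ℝ),
      B ((e.symm (A *ᵥ z) : ↥V) : L) ((e.symm w : ↥V) : L) = 0 := by
    intro A hA z w
    rw [hbr A hA z, ← lie_skew, map_neg, LinearMap.neg_apply,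
      hinv _ (e.symm z).2, hVab _ (e.symm z).2 _ (e.symm w).2]
    simp
  -- the antisymmetry relation on the K-part
  have keyR : ∀ (A : Matrix (Fin n) (Fin n) ℝ) (hA : A ∈ LieAlgebra.Orthogonal.so (Fin n) ℝ)
      (C : Matrix (Fin n) (Fin n) ℝ) (hC : C ∈ LieAlgebra.Orthogonal.so (Fin n) ℝ)
      (z : Fin n → ℝ),
      B ((e.symm (A *ᵥ z) : ↥V) : L) ((f.symm ⟨C, hC⟩ : ↥K) : L)
        = - B ((e.symm (C *ᵥ z) : ↥V) : L) ((f.symm ⟨A, hA⟩ : ↥K) : L) := by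
    intro A hA C hC z
    rw [hbr A hA z, hbr C hC z]
    rw [← lie_skew, map_neg, LinearMap.neg_apply, hinv _ (e.symm z).2, neg_neg]
    conv_rhs => rw [← lie_skew, map_neg, LinearMap.neg_apply]
    rw [neg_neg, hsym]
  -- B vanishes on V × V
  have hVV0 : ∀ (z w : Fin n → ℝ), B ((e.symm z : ↥V) : L) ((e.symm w : ↥V) : L) = 0 := by
    intro z w
    refine funext_vanish (fun z => B ((e.symm z : ↥V) : L) ((e.symm w : ↥V) : L)) ?_ ?_ ?_ z
    · intro a b; simp
    · intro c a; simp
    · intro i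
      obtain ⟨k, hki, -, -⟩ := exists_ne3 hn i i i
      rw [← Eij_mulVec_same (Ne.symm hki)]
      exact key1 (Eij i k) (Eij_mem i k) (Pi.single k 1) w
  -- B vanishes against basis elements of K, for all of V
  have hKz : ∀ (i j : Fin n), i ≠ j → ∀ (w : Fin n → ℝ),
      B ((e.symm w : ↥V) : L) ((f.symm ⟨Eij i j, Eij_mem i j⟩ : ↥K) : L) = 0 := by
    intro i j hij w
    refine funext_vanish
      (fun w => B ((e.symm w : ↥V) : L) ((f.symm ⟨Eij i j, Eij_mem i j⟩ : ↥K) : L)) ?_ ?_ ?_ w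
    · intro a b; simp
    · intro c a; simp
    · intro p
      obtain ⟨k, hkp, hki, hkj⟩ := exists_ne3 hn p i j
      rw [← Eij_mulVec_same (Ne.symm hkp)]
      beta_reduce
      rw [keyR (Eij p k) (Eij_mem p k) (Eij i j) (Eij_mem i j) (Pi.single k 1),
        Eij_mulVec_ne hki hkj]
      simp
  -- B vanishes on V × K
  have hK0 : ∀ (C : Matrix (Fin n) (Fin n) ℝ) (hC : C ∈ LieAlgebra.Orthogonal.so (Fin n) ℝ)
      (w : Fin n → ℝ),
      B ((e.symm w : ↥V) : L) ((f.symm ⟨C, hC⟩ : ↥K) : L) = 0 := by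
    intro C hC w
    refine funext_vanish
      (fun w => B ((e.symm w : ↥V) : L) ((f.symm ⟨C, hC⟩ : ↥K) : L)) ?_ ?_ ?_ w
    · intro a b; simp
    · intro c a; simp
    · intro i
      obtain ⟨j, hji, -, -⟩ := exists_ne3 hn i i i
      rw [← Eij_mulVec_same (Ne.symm hji)]
      beta_reduce
      rw [keyR (Eij i j) (Eij_mem i j) C hC (Pi.single j 1),
        hKz i j (Ne.symm hji) (C *ᵥ Pi.single j 1), neg_zero]
  -- assemble
  intro v hv x
  have hx : x ∈ K.toSubmodule ⊔ V.toSubmodule := by rw [hsum]; exact Submodule.mem_top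
  obtain ⟨k, hk, w, hw, rfl⟩ := Submodule.mem_sup.mp hx
  have hkK : k ∈ K := hk
  have hwV : w ∈ V := hw
  rw [map_add]
  have hBw : B v w = 0 := by
    have h := hVV0 (e ⟨v, hv⟩) (e ⟨w, hwV⟩)
    rwa [e.symm_apply_apply, e.symm_apply_apply] at h
  have hBk : B v k = 0 := by
    have h := hK0 ((f ⟨k, hkK⟩ : ↥(LieAlgebra.Orthogonal.so (Fin n) ℝ)) : Matrix (Fin n) (Fin n) ℝ)
      (f ⟨k, hkK⟩).2 (e ⟨v, hv⟩)
    rw [e.symm_apply_apply] at h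
    have h2 : (f.symm ⟨((f ⟨k, hkK⟩ : ↥(LieAlgebra.Orthogonal.so (Fin n) ℝ)) :
        Matrix (Fin n) (Fin n) ℝ), (f ⟨k, hkK⟩).2⟩ : ↥K) = ⟨k, hkK⟩ := f.symm_apply_apply _
    rw [h2] at h
    exact h
  rw [hBk, hBw, add_zero]

end NilInvariantPaper
end
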